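/- For ν > −1/2 and z in the unit disk, B_ν(z) = (2Γ(ν+1)/(√π Γ(ν+1/2))) · ∫_0^1 (1−t²)^{ν−1/2} e^{zt} dt. -/

import Mathlib

open MeasureTheory Set

lemma realBeta {p q : ℝ} (hp : 0 < p) (hq : 0 < q) :
    ∫ x in Set.Ioo (0:ℝ) 1, x ^ (p-1) * (1-x) ^ (q-1) =
      Real.Gamma p * Real.Gamma q / Real.Gamma (p+q) := by
  have hG : Real.Gamma (p+q) ≠ 0 := (Real.Gamma_pos_of_pos (by linarith)).ne'
  have hB : Complex.betaIntegral p q =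
      ((Real.Gamma p * Real.Gamma q / Real.Gamma (p+q) : ℝ) : ℂ) := by
    have h := Complex.Gamma_mul_Gamma_eq_betaIntegral
      (s := (p:ℂ)) (t := (q:ℂ)) (by simpa using hp) (by simpa using hq)
    rw [Complex.Gamma_ofReal, Complex.Gamma_ofReal, ← Complex.ofReal_add,
      Complex.Gamma_ofReal] at h
    have hGc : ((Real.Gamma (p+q) : ℝ) : ℂ) ≠ 0 := by exact_mod_cast hG
    field_simp at h ⊢
    rw [Complex.ofReal_div, Complex.ofReal_mul, eq_div_iff hGc, h]; ring
  have hcast : Complex.betaIntegral p q =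
      ((∫ x in Set.Ioo (0:ℝ) 1, x ^ (p-1) * (1-x) ^ (q-1) : ℝ) : ℂ) := by
    rw [Complex.betaIntegral, intervalIntegral.integral_of_le zero_le_one,
      MeasureTheory.integral_Ioc_eq_integral_Ioo,
      show (((∫ x in Set.Ioo (0:ℝ) 1, x ^ (p-1) * (1-x) ^ (q-1) : ℝ)) : ℂ) =
        ∫ x in Set.Ioo (0:ℝ) 1, ((x ^ (p-1) * (1-x) ^ (q-1) : ℝ) : ℂ) from
        (integral_ofReal).symm]
    refine setIntegral_congr_fun measurableSet_Ioo (fun x hx => ?_)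
    obtain ⟨hx0, hx1⟩ := hx
    rw [Complex.ofReal_mul, Complex.ofReal_cpow hx0.le, Complex.ofReal_cpow (by linarith)]
    push_cast
    ring
  rw [hcast] at hB
  exact_mod_cast hB

lemma realBeta_integrable {p q : ℝ} (hp : 0 < p) (hq : 0 < q) :
    IntegrableOn (fun x : ℝ => x ^ (p-1) * (1-x) ^ (q-1)) (Set.Ioo 0 1) := by
  have h := (Complex.betaIntegral_convergent (u := (p:ℂ)) (v := (q:ℂ))
    (by simpa using hp) (by simpa using hq))
  rw [intervalIntegrable_iff_integrableOn_Ioc_of_le zero_le_one] at h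
  have h2 : IntegrableOn (fun x : ℝ =>
      ‖(x:ℂ) ^ ((p:ℂ)-1) * ((1:ℂ)-x) ^ ((q:ℂ)-1)‖) (Set.Ioo 0 1) :=
    (IntegrableOn.mono_set h.norm Ioo_subset_Ioc_self)
  refine h2.congr_fun (fun x hx => ?_) measurableSet_Ioo
  obtain ⟨hx0, hx1⟩ := hx
  beta_reduce
  rw [norm_mul,
    Complex.norm_cpow_eq_rpow_re_of_pos hx0,
    show ((1:ℂ) - (x:ℝ)) = (((1 - x : ℝ)):ℂ) by push_cast; ring,
    Complex.norm_cpow_eq_rpow_re_of_pos (by linarith)]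
  norm_num

lemma sq_image_Ioo : (fun x : ℝ => x ^ 2) '' Set.Ioo 0 1 = Set.Ioo (0:ℝ) 1 := by
  ext u
  constructor
  · rintro ⟨x, ⟨hx0, hx1⟩, rfl⟩
    refine ⟨by positivity, ?_⟩
    show x ^ 2 < 1
    nlinarith
  · rintro ⟨hu0, hu1⟩
    exact ⟨Real.sqrt u, ⟨Real.sqrt_pos.mpr hu0,
      (Real.sqrt_lt' one_pos).mpr (by linarith)⟩, Real.sq_sqrt hu0.le⟩

lemma sq_hasDeriv : ∀ x ∈ Set.Ioo (0:ℝ) 1,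
    HasDerivWithinAt (fun x : ℝ => x ^ 2) (2 * x) (Set.Ioo 0 1) x := by
  intro x _
  simpa using (hasDerivAt_pow 2 x).hasDerivWithinAt

lemma sq_injOn : Set.InjOn (fun x : ℝ => x ^ 2) (Set.Ioo 0 1) := fun a ha b hb h =>
  (pow_left_strictMonoOn₀ two_ne_zero).injOn (le_of_lt ha.1) (le_of_lt hb.1) h

lemma key_pt {q : ℝ} (n : ℕ) {x : ℝ} (hx : x ∈ Set.Ioo (0:ℝ) 1) :
    |2*x| • ((x^2) ^ ((((n:ℝ)+1)/2) - 1) * (1 - x^2) ^ (q-1)) =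
      2 * ((1 - x^2) ^ (q-1) * x ^ n) := by
  obtain ⟨hx0, hx1⟩ := hx
  have h1 : (x^2 : ℝ) ^ ((((n:ℝ)+1)/2) - 1) = x ^ ((n:ℝ) - 1) := by
    rw [← Real.rpow_natCast x 2, ← Real.rpow_mul hx0.le]
    congr 1; push_cast; ring
  have h2 : x ^ ((n:ℝ) - 1) * x = x ^ n := by
    rw [← Real.rpow_add_one hx0.ne']
    norm_num
  rw [smul_eq_mul, abs_of_pos (by linarith), h1]
  linear_combination (2 * (1 - x^2) ^ (q-1)) * h2

lemma In_integrable {q : ℝ} (hq : 0 < q) (n : ℕ) :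
    IntegrableOn (fun t : ℝ => (1 - t^2) ^ (q-1) * t ^ n) (Set.Ioo 0 1) := by
  have hp0 : 0 < (((n:ℝ)+1)/2) := by positivity
  have h := (integrableOn_image_iff_integrableOn_abs_deriv_smul measurableSet_Ioo
    sq_hasDeriv sq_injOn (fun u : ℝ => u ^ ((((n:ℝ)+1)/2)-1) * (1-u) ^ (q-1)))
  rw [sq_image_Ioo] at h
  have h2 := h.mp (realBeta_integrable hp0 hq)
  refine MeasureTheory.IntegrableOn.congr_fun (h2.const_mul (2⁻¹ : ℝ))
    (fun x hx => ?_) measurableSet_Ioo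
  rw [key_pt n hx]; ring

lemma In_val {q : ℝ} (hq : 0 < q) (n : ℕ) :
    ∫ t in Set.Ioo (0:ℝ) 1, (1 - t^2) ^ (q-1) * t ^ n =
      Real.Gamma (((n:ℝ)+1)/2) * Real.Gamma q /
        (2 * Real.Gamma (((n:ℝ)+1)/2 + q)) := by
  have hp0 : 0 < (((n:ℝ)+1)/2) := by positivity
  have h := integral_image_eq_integral_abs_deriv_smul measurableSet_Ioo sq_hasDeriv sq_injOn
    (fun u : ℝ => u ^ ((((n:ℝ)+1)/2)-1) * (1-u) ^ (q-1))
  rw [sq_image_Ioo, realBeta hp0 hq] at h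
  rw [setIntegral_congr_fun measurableSet_Ioo (fun x hx => key_pt n hx),
    integral_const_mul] at h
  have hG : Real.Gamma (((n:ℝ)+1)/2 + q) ≠ 0 :=
    (Real.Gamma_pos_of_pos (by positivity)).ne'
  field_simp at h ⊢
  linarith

/-- The Bessel-Struve kernel function. -/
noncomputable def besselStruve (ν : ℝ) (z : ℂ) : ℂ :=
  ∑' n : ℕ, ((Real.Gamma (ν + 1) * Real.Gamma (((n : ℝ) + 1) / 2) /
    (Real.sqrt Real.pi * (n.factorial : ℝ) * Real.Gamma ((n : ℝ) / 2 + ν + 1)) : ℝ) : ℂ) * z ^ n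

theorem besselStruve_integral_rep (ν : ℝ) (hν : -(1/2) < ν) (z : ℂ) (hz : ‖z‖ < 1) :
    besselStruve ν z =
      ((2 * Real.Gamma (ν + 1) / (Real.sqrt Real.pi * Real.Gamma (ν + 1/2)) : ℝ) : ℂ) *
        ∫ t in (0:ℝ)..1, (((1 - t ^ 2) ^ (ν - 1/2) : ℝ) : ℂ) * Complex.exp (z * t) := by
  have hq : 0 < ν + 1/2 := by linarith
  set g : ℕ → ℝ → ℝ := fun n t => (1 - t^2) ^ (ν + 1/2 - 1) * t ^ n with hg
  set F : ℕ → ℝ → ℂ := fun n t => (z ^ n / (n.factorial : ℂ)) * ((g n t : ℝ) : ℂ) with hF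
  have hgnonneg : ∀ n : ℕ, ∀ t ∈ Set.Ioo (0:ℝ) 1, 0 ≤ g n t := by
    intro n t ht
    have h1 : (0:ℝ) ≤ 1 - t^2 := by nlinarith [ht.1, ht.2]
    exact mul_nonneg (Real.rpow_nonneg h1 _) (pow_nonneg ht.1.le n)
  have hgint : ∀ n : ℕ, IntegrableOn (g n) (Set.Ioo 0 1) := fun n => In_integrable hq n
  have hFint : ∀ n : ℕ, Integrable (F n) (volume.restrict (Set.Ioo 0 1)) := fun n =>
    ((hgint n).ofReal (𝕜 := ℂ)).const_mul _
  -- the norm integrals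
  have hInorm : ∀ n : ℕ, ∫ t in Set.Ioo (0:ℝ) 1, ‖F n t‖ =
      (‖z‖ ^ n / (n.factorial : ℝ)) * ∫ t in Set.Ioo (0:ℝ) 1, g n t := by
    intro n
    rw [← integral_const_mul]
    refine setIntegral_congr_fun measurableSet_Ioo (fun t ht => ?_)
    rw [hF]
    simp only [norm_mul, norm_div, norm_pow, Complex.norm_natCast, Complex.norm_real]
    rw [Real.norm_of_nonneg (hgnonneg n t ht)]
  have hIle : ∀ n : ℕ, ∫ t in Set.Ioo (0:ℝ) 1, g n t ≤ ∫ t in Set.Ioo (0:ℝ) 1, g 0 t := by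
    intro n
    refine setIntegral_mono_on (hf := hgint n) (hg := hgint 0) measurableSet_Ioo
      (fun t ht => ?_)
    rw [hg]
    simp only [pow_zero, mul_one]
    have h1 : (0:ℝ) ≤ 1 - t^2 := by nlinarith [ht.1, ht.2]
    calc (1 - t^2) ^ (ν + 1/2 - 1) * t ^ n
        ≤ (1 - t^2) ^ (ν + 1/2 - 1) * 1 :=
          mul_le_mul_of_nonneg_left (pow_le_one₀ ht.1.le ht.2.le) (Real.rpow_nonneg h1 _)
      _ = (1 - t^2) ^ (ν + 1/2 - 1) := mul_one _
  have hsum : Summable (fun n : ℕ => ∫ t in Set.Ioo (0:ℝ) 1, ‖F n t‖) := by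
    refine Summable.of_nonneg_of_le
      (fun n => integral_nonneg (fun t => norm_nonneg _)) (fun n => ?_)
      ((Real.summable_pow_div_factorial ‖z‖).mul_right (∫ t in Set.Ioo (0:ℝ) 1, g 0 t))
    rw [hInorm n]
    exact mul_le_mul_of_nonneg_left (hIle n) (by positivity)
  have hswap := MeasureTheory.integral_tsum_of_summable_integral_norm hFint hsum
  -- pointwise sum
  have hpt : ∀ t : ℝ, ∑' n : ℕ, F n t =
      (((1 - t^2) ^ (ν + 1/2 - 1) : ℝ) : ℂ) * Complex.exp (z * t) := by
    intro t
    have he : Complex.exp (z * t) = ∑' n : ℕ, (z * t) ^ n / (n.factorial : ℂ) := by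
      rw [Complex.exp_eq_exp_ℂ, NormedSpace.exp_eq_tsum_div]
    rw [he, ← tsum_mul_left]
    refine tsum_congr (fun n => ?_)
    rw [hF, hg]
    push_cast
    ring
  -- per-term integral
  have hterm : ∀ n : ℕ, ∫ t in Set.Ioo (0:ℝ) 1, F n t =
      (z ^ n / (n.factorial : ℂ)) * ((∫ t in Set.Ioo (0:ℝ) 1, g n t : ℝ) : ℂ) := by
    intro n
    rw [hF, integral_const_mul]
    congr 1
    exact (show (∫ t in Set.Ioo (0:ℝ) 1, ((g n t : ℝ) : ℂ)) =
      ((∫ t in Set.Ioo (0:ℝ) 1, g n t : ℝ) : ℂ) from integral_ofReal)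
  -- rewrite the RHS integral
  rw [intervalIntegral.integral_of_le zero_le_one, MeasureTheory.integral_Ioc_eq_integral_Ioo,
    show ν - 1/2 = ν + 1/2 - 1 from by ring]
  have hint_eq : ∫ t in Set.Ioo (0:ℝ) 1,
      (((1 - t^2) ^ (ν + 1/2 - 1) : ℝ) : ℂ) * Complex.exp (z * t) =
      ∑' n : ℕ, ∫ t in Set.Ioo (0:ℝ) 1, F n t := by
    rw [hswap]
    exact setIntegral_congr_fun measurableSet_Ioo (fun t _ => (hpt t).symm)
  rw [show (fun t : ℝ => (((1 - t ^ 2) ^ (ν + 1/2 - 1) : ℝ) : ℂ) * Complex.exp (z * t)) =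
      (fun t : ℝ => (((1 - t^2) ^ (ν + 1/2 - 1) : ℝ) : ℂ) * Complex.exp (z * t)) from rfl,
    hint_eq, ← tsum_mul_left, besselStruve]
  refine tsum_congr (fun n => ?_)
  rw [hterm n, In_val hq n,
    show ((n:ℝ)+1)/2 + (ν + 1/2) = (n:ℝ)/2 + ν + 1 from by ring]
  have hπ : Real.sqrt Real.pi ≠ 0 := by positivity
  have hG1 : Real.Gamma (ν + 1/2) ≠ 0 := (Real.Gamma_pos_of_pos hq).ne'
  have hG2 : Real.Gamma ((n:ℝ)/2 + ν + 1) ≠ 0 :=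
    (Real.Gamma_pos_of_pos (by have := Nat.cast_nonneg (α := ℝ) n; linarith)).ne'
  have hfac : ((n.factorial : ℝ)) ≠ 0 := Nat.cast_ne_zero.mpr n.factorial_ne_zero
  have hreal : (2 * Real.Gamma (ν + 1) / (Real.sqrt Real.pi * Real.Gamma (ν + 1/2))) *
      (Real.Gamma (((n:ℝ)+1)/2) * Real.Gamma (ν + 1/2) /
        (2 * Real.Gamma ((n:ℝ)/2 + ν + 1))) / (n.factorial : ℝ) =
      Real.Gamma (ν + 1) * Real.Gamma (((n:ℝ)+1)/2) /
        (Real.sqrt Real.pi * (n.factorial : ℝ) * Real.Gamma ((n:ℝ)/2 + ν + 1)) := by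
    rw [div_mul_div_comm, div_div, div_eq_div_iff
      (mul_ne_zero (mul_ne_zero (mul_ne_zero hπ hG1) (mul_ne_zero two_ne_zero hG2)) hfac)
      (mul_ne_zero (mul_ne_zero hπ hfac) hG2)]
    ring
  symm
  calc ((2 * Real.Gamma (ν + 1) / (Real.sqrt Real.pi * Real.Gamma (ν + 1/2)) : ℝ) : ℂ) *
        ((z ^ n / (n.factorial : ℂ)) *
          ((Real.Gamma (((n:ℝ)+1)/2) * Real.Gamma (ν + 1/2) /
            (2 * Real.Gamma ((n:ℝ)/2 + ν + 1)) : ℝ) : ℂ))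
      = (((2 * Real.Gamma (ν + 1) / (Real.sqrt Real.pi * Real.Gamma (ν + 1/2))) *
          (Real.Gamma (((n:ℝ)+1)/2) * Real.Gamma (ν + 1/2) /
            (2 * Real.Gamma ((n:ℝ)/2 + ν + 1))) / (n.factorial : ℝ) : ℝ) : ℂ) * z ^ n := by
        push_cast
        ring
    _ = _ := by rw [hreal]
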